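/- Let α, β, γ, λ, μ be real numbers and let N(α,β,γ,λ,μ) be the 3×3 real matrix whose rows are (α,β,γ), (λα,λβ,λγ), (μα,μβ,μγ). Suppose α = 0 and β ≠ 0. Then: (i) if λ = 0 and μ = 0, the evolution algebra E_{N(α,β,γ,λ,μ)} is isomorphic to E₁₀ (structure matrix with rows (0,0,0), (0,0,0), (1,0,0)); (ii) if λ = 0, γ = 0 and μ > 0, it is isomorphic to E₁₁ (rows (0,0,0), (1,0,0), (1,0,0)); (iii) if λ = 0, γ = 0 and μ < 0, it is isomorphic to E₁₂ (rows (0,0,0), (1,0,0), (−1,0,0)). -/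

import Mathlib

/-- Evolution algebra multiplication on ℝ³ determined by a structure matrix `A`:
`(x ∗_A y) j = ∑ i, x i * y i * A i j`. -/
def evolMul (A : Matrix (Fin 3) (Fin 3) ℝ) (x y : Fin 3 → ℝ) : Fin 3 → ℝ :=
  fun j => ∑ i, x i * y i * A i j

/-- The evolution algebras with structure matrices `A` and `B` are isomorphic:
there is an ℝ-linear equivalence of ℝ³ intertwining the two multiplications. -/
def EvolIso (A B : Matrix (Fin 3) (Fin 3) ℝ) : Prop :=
  ∃ f : (Fin 3 → ℝ) ≃ₗ[ℝ] (Fin 3 → ℝ),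
    ∀ x y, f (evolMul A x y) = evolMul B (f x) (f y)

/-- Helper to build a linear equivalence from explicit mutually inverse linear functions. -/
noncomputable def mkLE (f g : (Fin 3 → ℝ) → (Fin 3 → ℝ))
    (hadd : ∀ x y, f (x + y) = f x + f y)
    (hsmul : ∀ (r : ℝ) x, f (r • x) = r • f x)
    (hgf : ∀ x, g (f x) = x) (hfg : ∀ x, f (g x) = x) :
    (Fin 3 → ℝ) ≃ₗ[ℝ] (Fin 3 → ℝ) where
  toFun := f
  map_add' := hadd
  map_smul' := hsmul
  invFun := g
  left_inv := hgf
  right_inv := hfg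

theorem stmt (a b c l m : ℝ)
    (ha : a = 0) (hb : b ≠ 0) :
    (l = 0 ∧ m = 0 → EvolIso (!![a, b, c; l * a, l * b, l * c; m * a, m * b, m * c] : Matrix (Fin 3) (Fin 3) ℝ) (!![0, 0, 0; 0, 0, 0; 1, 0, 0] : Matrix (Fin 3) (Fin 3) ℝ)) ∧
    (l = 0 ∧ c = 0 ∧ m > 0 → EvolIso (!![a, b, c; l * a, l * b, l * c; m * a, m * b, m * c] : Matrix (Fin 3) (Fin 3) ℝ) (!![0, 0, 0; 1, 0, 0; 1, 0, 0] : Matrix (Fin 3) (Fin 3) ℝ)) ∧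
    (l = 0 ∧ c = 0 ∧ m < 0 → EvolIso (!![a, b, c; l * a, l * b, l * c; m * a, m * b, m * c] : Matrix (Fin 3) (Fin 3) ℝ) (!![0, 0, 0; 1, 0, 0; -1, 0, 0] : Matrix (Fin 3) (Fin 3) ℝ)) := by
  subst ha
  refine ⟨?_, ?_, ?_⟩
  · rintro ⟨hl, hm⟩
    subst hl; subst hm
    refine ⟨mkLE (fun x => ![x 1 / b, x 2 - c * x 1 / b, x 0])
      (fun y => ![y 2, b * y 0, y 1 + c * y 0]) ?_ ?_ ?_ ?_, ?_⟩
    · intro x y; funext j; fin_cases j <;> simp <;> ring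
    · intro r x; funext j; fin_cases j <;> simp [smul_eq_mul] <;> ring
    · intro x; funext j; fin_cases j <;> (simp; try field_simp; try ring)
    · intro x; funext j; fin_cases j <;> (simp; try field_simp; try ring)
    · intro x y
      funext j
      fin_cases j <;>
        simp [mkLE, evolMul, Fin.sum_univ_three, Matrix.vecHead, Matrix.vecTail] <;>
        (try field_simp) <;> (try ring)
  · rintro ⟨hl, hc, hm⟩
    subst hl; subst hc
    have hs : Real.sqrt m ≠ 0 := Real.sqrt_ne_zero'.2 hm
    have hss : Real.sqrt m * Real.sqrt m = m := Real.mul_self_sqrt hm.le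
    refine ⟨mkLE (fun x => ![x 1 / b, x 0, Real.sqrt m * x 2])
      (fun y => ![y 1, b * y 0, y 2 / Real.sqrt m]) ?_ ?_ ?_ ?_, ?_⟩
    · intro x y; funext j; fin_cases j <;> simp <;> ring
    · intro r x; funext j; fin_cases j <;> simp [smul_eq_mul] <;> ring
    · intro x; funext j; fin_cases j <;> (simp; try field_simp; try ring)
    · intro x; funext j; fin_cases j <;> (simp; try field_simp; try ring)
    · intro x y
      funext j
      fin_cases j <;>
        simp [mkLE, evolMul, Fin.sum_univ_three, Matrix.vecHead, Matrix.vecTail] <;>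
        (try (field_simp; linear_combination -x 2 * y 2 * hss))
  · rintro ⟨hl, hc, hm⟩
    subst hl; subst hc
    have hm' : (0:ℝ) < -m := by linarith
    have hs : Real.sqrt (-m) ≠ 0 := Real.sqrt_ne_zero'.2 hm'
    have hss : Real.sqrt (-m) * Real.sqrt (-m) = -m := Real.mul_self_sqrt hm'.le
    refine ⟨mkLE (fun x => ![x 1 / b, x 0, Real.sqrt (-m) * x 2])
      (fun y => ![y 1, b * y 0, y 2 / Real.sqrt (-m)]) ?_ ?_ ?_ ?_, ?_⟩
    · intro x y; funext j; fin_cases j <;> simp <;> ring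
    · intro r x; funext j; fin_cases j <;> simp [smul_eq_mul] <;> ring
    · intro x; funext j; fin_cases j <;> (simp; try field_simp; try ring)
    · intro x; funext j; fin_cases j <;> (simp; try field_simp; try ring)
    · intro x y
      funext j
      fin_cases j <;>
        simp [mkLE, evolMul, Fin.sum_univ_three, Matrix.vecHead, Matrix.vecTail] <;>
        (try (field_simp; linear_combination x 2 * y 2 * hss))
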